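/- arXiv:cs/0507034 — 3 statements merged into one kernel-verified Lean document; each statement's English description precedes it below -/
import Mathlib

section
/- In the network B_clockwise(κ,m), define SPAN(u) = { v : 0 ≤ δ_clockwise(u,v) < m·κ^{ℓ(u)+1} }. If u ≠ t, t ∈ SPAN(u), δ_clockwise(u,t) ≥ m, and ℓ(u) ≥ 1, then every greedy next hop v of u (any neighbor of u minimizing δ_clockwise(·,t)) satisfies ℓ(v) = ℓ(u) − 1 and t ∈ SPAN(v). -/
/-- The clockwise distance `(v - u) mod n` between two nodes on a ring of `n` nodes. -/
def clockDelta (n : ℕ) (u v : Fin n) : ℕ := ((v : ℕ) + n - (u : ℕ)) % n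

/-- The level `ℓ(u) = (m-1) - (u mod m)` of a node. -/
def clockLevel (m : ℕ) {n : ℕ} (u : Fin n) : ℕ := (m - 1) - ((u : ℕ) % m)

/-- The directed edges of the Papillon network `B_clockwise(κ, m)` on `n = κ^m * m` nodes:
`u` links to `(u + x) mod n` for `x ∈ {1 + i·m·κ^{ℓ(u)} : 0 ≤ i < κ}`. -/
def clockEdge (κ m : ℕ) (u v : Fin (κ ^ m * m)) : Prop :=
  ∃ i < κ, (v : ℕ) = ((u : ℕ) + (1 + i * m * κ ^ clockLevel m u)) % (κ ^ m * m)

/-- `v` is a greedy next hop from `u` towards target `t` with respect to `δ_clockwise`: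
`v` is a neighbor of `u` minimizing the clockwise distance to `t` among `u`'s neighbors. -/
def clockGreedyStep (κ m : ℕ) (t u v : Fin (κ ^ m * m)) : Prop :=
  clockEdge κ m u v ∧ ∀ v', clockEdge κ m u v' →
    clockDelta (κ ^ m * m) v t ≤ clockDelta (κ ^ m * m) v' t

/-- `v ∈ SPAN(u)`, i.e. `0 ≤ δ_clockwise(u, v) < m · κ^{ℓ(u)+1}`. -/
def clockInSpan (κ m : ℕ) (u v : Fin (κ ^ m * m)) : Prop :=
  clockDelta (κ ^ m * m) u v < m * κ ^ (clockLevel m u + 1)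

lemma clockDelta_eq_val {n : ℕ} [NeZero n] (u v : Fin n) :
    clockDelta n u v = (((v : ℕ) : ZMod n) - ((u : ℕ) : ZMod n)).val := by
  have hu : (u : ℕ) ≤ (v : ℕ) + n := le_trans (le_of_lt u.isLt) (Nat.le_add_left _ _)
  have h1 : (((v : ℕ) : ZMod n) - ((u : ℕ) : ZMod n))
      = (((v : ℕ) + n - (u : ℕ) : ℕ) : ZMod n) := by
    rw [Nat.cast_sub hu]
    push_cast
    simp [ZMod.natCast_self]
  rw [clockDelta, h1, ZMod.val_natCast]

lemma zmod_sub_val {n : ℕ} [NeZero n] (D : ZMod n) (x : ℕ) (h : x ≤ D.val) :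
    (D - (x : ZMod n)).val = D.val - x := by
  have hD : D = ((D.val : ℕ) : ZMod n) := by
    simp [ZMod.natCast_val, ZMod.cast_id]
  rw [hD]
  rw [← Nat.cast_sub h, ZMod.val_natCast, ZMod.val_natCast,
    Nat.mod_eq_of_lt (lt_of_le_of_lt (Nat.sub_le _ _) (ZMod.val_lt D)),
    Nat.mod_eq_of_lt (ZMod.val_lt D)]

lemma edge_delta {κ m : ℕ} [NeZero (κ ^ m * m)] (u t : Fin (κ ^ m * m)) (x : ℕ)
    (v : Fin (κ ^ m * m)) (hv : (v : ℕ) = ((u : ℕ) + x) % (κ ^ m * m))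
    (hx : x ≤ clockDelta (κ ^ m * m) u t) :
    clockDelta (κ ^ m * m) v t = clockDelta (κ ^ m * m) u t - x := by
  have hcast : ((v : ℕ) : ZMod (κ ^ m * m))
      = ((u : ℕ) : ZMod (κ ^ m * m)) + (x : ZMod (κ ^ m * m)) := by
    rw [hv, ZMod.natCast_mod]; push_cast; ring
  rw [clockDelta_eq_val v t, hcast]
  have h2 : ((t : ℕ) : ZMod (κ ^ m * m)) - (((u : ℕ) : ZMod (κ ^ m * m)) + (x : ZMod (κ ^ m * m)))
      = (((t : ℕ) : ZMod (κ ^ m * m)) - ((u : ℕ) : ZMod (κ ^ m * m))) - (x : ZMod (κ ^ m * m)) := by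
    ring
  rw [h2, zmod_sub_val _ _ (by rw [← clockDelta_eq_val]; exact hx), ← clockDelta_eq_val]

/-- In `B_clockwise(κ, m)`: if `u ≠ t`, `t ∈ SPAN(u)`, `δ_clockwise(u, t) ≥ m` and
`ℓ(u) ≥ 1`, then every greedy next hop `v` of `u` towards `t` satisfies
`ℓ(v) = ℓ(u) - 1` and `t ∈ SPAN(v)`. -/
theorem clockwise_greedy_phase_two (κ m : ℕ) (hκ : 1 ≤ κ) (hm : 1 ≤ m)
    (u t v : Fin (κ ^ m * m)) (hne : u ≠ t)
    (hspan : clockInSpan κ m u t)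
    (hfar : m ≤ clockDelta (κ ^ m * m) u t)
    (hlev : 1 ≤ clockLevel m u)
    (hgreedy : clockGreedyStep κ m t u v) :
    clockLevel m v = clockLevel m u - 1 ∧ clockInSpan κ m v t := by
  have hn : 0 < κ ^ m * m := Nat.mul_pos (Nat.pow_pos hκ) hm
  haveI : NeZero (κ ^ m * m) := ⟨hn.ne'⟩
  -- level of u is at least 1, so u % m + 1 ≤ m - 1
  have humod : (u : ℕ) % m + 1 ≤ m - 1 := by
    have h : 1 ≤ (m - 1) - ((u : ℕ) % m) := hlev
    omega
  have hm2 : 2 ≤ m := by omega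
  -- Part 1: level of v
  obtain ⟨i, hik, hvi⟩ := hgreedy.1
  have hmn : m ∣ κ ^ m * m := ⟨κ ^ m, mul_comm _ _⟩
  have hvmod : (v : ℕ) % m = (u : ℕ) % m + 1 := by
    rw [hvi, Nat.mod_mod_of_dvd _ hmn]
    have harr : (u : ℕ) + (1 + i * m * κ ^ clockLevel m u)
        = ((u : ℕ) + 1) + (i * κ ^ clockLevel m u) * m := by ring
    rw [harr, Nat.add_mul_mod_self_right, Nat.add_mod,
      Nat.mod_eq_of_lt (show 1 < m by omega)]
    exact Nat.mod_eq_of_lt (by omega)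
  have hlevv : clockLevel m v = clockLevel m u - 1 := by
    rw [clockLevel, clockLevel, hvmod]
    omega
  refine ⟨hlevv, ?_⟩
  -- Part 2: the span bound
  have hdlt : clockDelta (κ ^ m * m) u t < κ * (m * κ ^ clockLevel m u) := by
    have h := hspan
    rw [clockInSpan, pow_succ] at h
    calc clockDelta (κ ^ m * m) u t < m * (κ ^ clockLevel m u * κ) := h
    _ = κ * (m * κ ^ clockLevel m u) := by ring
  have hd1 : 1 ≤ clockDelta (κ ^ m * m) u t := le_trans hm hfar
  have hM : 0 < m * κ ^ clockLevel m u :=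
    Nat.mul_pos hm (Nat.pow_pos hκ)
  set M := m * κ ^ clockLevel m u with hMdef
  set d := clockDelta (κ ^ m * m) u t with hddef
  have hi'k : (d - 1) / M < κ := by
    rw [Nat.div_lt_iff_lt_mul hM]
    omega
  have hdm := Nat.div_add_mod (d - 1) M
  have hrlt : (d - 1) % M < M := Nat.mod_lt _ hM
  have hxd : 1 + (d - 1) / M * M ≤ d := by
    have h := Nat.div_mul_le_self (d - 1) M
    omega
  set x := 1 + (d - 1) / M * M with hxdef
  set v' : Fin (κ ^ m * m) := ⟨((u : ℕ) + x) % (κ ^ m * m), Nat.mod_lt _ hn⟩ with hv'def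
  have hedge : clockEdge κ m u v' := by
    refine ⟨(d - 1) / M, hi'k, ?_⟩
    show ((u : ℕ) + x) % (κ ^ m * m) = _
    congr 1
    rw [hxdef, hMdef]
    ring
  have hdelta' : clockDelta (κ ^ m * m) v' t = d - x :=
    edge_delta u t x v' rfl hxd
  have hmodlt : d - x < M := by
    have h1 : M * ((d - 1) / M) = (d - 1) / M * M := mul_comm _ _
    omega
  have hle := hgreedy.2 v' hedge
  rw [clockInSpan, hlevv]
  have hexp : m * κ ^ (clockLevel m u - 1 + 1) = M := by
    have h : clockLevel m u - 1 + 1 = clockLevel m u := by omega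
    rw [hMdef, h]
  rw [hexp]
  calc clockDelta (κ ^ m * m) v t ≤ clockDelta (κ ^ m * m) v' t := hle
  _ = d - x := hdelta'
  _ < M := hmodlt
end

section
/- In the network B_clockwise(κ,m), define SPAN(u) = { v : 0 ≤ δ_clockwise(u,v) < m·κ^{ℓ(u)+1} }. If ℓ(u) = 0, t ∈ SPAN(u), and δ_clockwise(u,t) ≥ m, then every greedy next hop v of u (any neighbor of u minimizing δ_clockwise(·,t)) satisfies ℓ(v) = m−1 and δ_clockwise(v,t) < m. -/
lemma clockDelta_lt (n : ℕ) (hn : 0 < n) (a b : Fin n) : clockDelta n a b < n :=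
  Nat.mod_lt _ hn

lemma clockDelta_int (n : ℕ) (a b : Fin n) :
    (clockDelta n a b : ℤ) = ((b : ℤ) - (a : ℤ)) % n := by
  have h : (a : ℕ) ≤ (b : ℕ) + n := le_trans a.isLt.le (Nat.le_add_left _ _)
  unfold clockDelta
  push_cast [h]
  have : (b : ℤ) + n - a = (b - a) + n := by ring
  rw [this]
  simp [Int.add_mul_emod_self_left]

lemma delta_shift (n : ℕ) (hn : 0 < n) (u t : Fin n) (s : ℕ) (hs : s ≤ clockDelta n u t)
    (w : Fin n) (hw : (w : ℕ) = ((u : ℕ) + s) % n) :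
    clockDelta n w t = clockDelta n u t - s := by
  have hd : clockDelta n u t < n := clockDelta_lt n hn u t
  have h1 : (clockDelta n u t : ℤ) = ((t : ℤ) - u) % n := clockDelta_int n u t
  have h2 : (clockDelta n w t : ℤ) = ((t : ℤ) - w) % n := clockDelta_int n w t
  have hw' : (w : ℤ) % n = ((u : ℤ) + s) % n := by
    rw [show ((w : ℕ) : ℤ) = ((((u : ℕ) + s) % n : ℕ) : ℤ) from by rw [hw]]
    push_cast
    rw [Int.emod_emod_of_dvd _ dvd_rfl]
  have key : ((t : ℤ) - w) % n = ((clockDelta n u t : ℤ) - s) := by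
    rw [Int.sub_emod, hw', ← Int.sub_emod]
    have : (t : ℤ) - ((u : ℤ) + s) = ((t : ℤ) - u) - s := by ring
    rw [this, Int.sub_emod, ← h1]
    have hsn : (s : ℤ) % n = s := Int.emod_eq_of_lt (by positivity) (by
      have : (s : ℕ) < n := lt_of_le_of_lt hs hd
      exact_mod_cast this)
    rw [hsn]
    exact Int.emod_eq_of_lt (by omega) (by omega)
  rw [key] at h2
  omega

/-- In `B_clockwise(κ, m)`: if `ℓ(u) = 0`, `t ∈ SPAN(u)` and `δ_clockwise(u, t) ≥ m`, then
every greedy next hop `v` of `u` towards `t` satisfies `ℓ(v) = m - 1` and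
`δ_clockwise(v, t) < m`. -/
theorem clockwise_greedy_phase_two_end (κ m : ℕ) (hκ : 1 ≤ κ) (hm : 1 ≤ m)
    (u t v : Fin (κ ^ m * m))
    (hlev : clockLevel m u = 0)
    (hspan : clockInSpan κ m u t)
    (hfar : m ≤ clockDelta (κ ^ m * m) u t)
    (hgreedy : clockGreedyStep κ m t u v) :
    clockLevel m v = m - 1 ∧ clockDelta (κ ^ m * m) v t < m := by
  have hn : 0 < κ ^ m * m := Nat.mul_pos (Nat.pow_pos (n := m) hκ) hm
  have hmn : m ∣ κ ^ m * m := ⟨κ ^ m, (mul_comm _ _)⟩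
  -- u % m = m - 1
  have hum : (u : ℕ) % m = m - 1 := by
    have h1 : (u : ℕ) % m < m := Nat.mod_lt _ hm
    unfold clockLevel at hlev
    omega
  have hlev' : clockLevel m u = 0 := by unfold clockLevel; omega
  -- Part 1 : level of any neighbor is m - 1
  have hlevel_nb : ∀ v' : Fin (κ ^ m * m), clockEdge κ m u v' → clockLevel m v' = m - 1 := by
    intro v' hv'
    obtain ⟨i, hi, hval⟩ := hv'
    rw [hlev', pow_zero, mul_one] at hval
    have h2 : (v' : ℕ) % m = ((u : ℕ) + (1 + i * m)) % m := by
      rw [hval, Nat.mod_mod_of_dvd _ hmn]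
    have h3 : ((u : ℕ) + (1 + i * m)) % m = 0 := by
      have he : ((u : ℕ) + (1 + i * m)) % m = ((u : ℕ) + 1) % m := by
        rw [show (u : ℕ) + (1 + i * m) = ((u : ℕ) + 1) + i * m by ring,
          Nat.add_mul_mod_self_right]
      rw [he]
      have hdm := Nat.mod_add_div' (u : ℕ) m
      have hdvd : (u : ℕ) + 1 = ((u : ℕ) / m + 1) * m := by rw [add_mul, one_mul]; omega
      rw [hdvd, Nat.mul_mod_left]
    unfold clockLevel
    omega
  have hd_lt : clockDelta (κ ^ m * m) u t < m * κ := by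
    have h5 := hspan
    unfold clockInSpan at h5
    rw [hlev', pow_one] at h5
    exact h5
  set d := clockDelta (κ ^ m * m) u t with hd_def
  have hd1 : 1 ≤ d := le_trans hm hfar
  have hi₀ : (d - 1) / m < κ := by
    rw [Nat.div_lt_iff_lt_mul hm]
    calc d - 1 < m * κ := by omega
    _ = κ * m := by ring
  have hs_le : 1 + ((d - 1) / m) * m ≤ d := by
    have h4 := Nat.div_mul_le_self (d - 1) m
    omega
  have hds : d - (1 + ((d - 1) / m) * m) = (d - 1) % m := by
    have h6 := Nat.mod_add_div' (d - 1) m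
    omega
  -- the witness neighbor
  have hedge : clockEdge κ m u ⟨((u : ℕ) + (1 + ((d - 1) / m) * m)) % (κ ^ m * m), Nat.mod_lt _ hn⟩ := by
    refine ⟨(d - 1) / m, hi₀, ?_⟩
    rw [hlev', pow_zero, mul_one]
  have hle := hgreedy.2 _ hedge
  have hwt := delta_shift (κ ^ m * m) hn u t (1 + ((d - 1) / m) * m) hs_le
    ⟨((u : ℕ) + (1 + ((d - 1) / m) * m)) % (κ ^ m * m), Nat.mod_lt _ hn⟩ rfl
  refine ⟨hlevel_nb v hgreedy.1, ?_⟩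
  have hmod : (d - 1) % m < m := Nat.mod_lt _ hm
  omega
end

section
/- In the undirected graph underlying the network B_absolute(k,m), for every pair of nodes (s,t) there exists a path from s to t of length at most m + ⌊m/2⌋; moreover, the average over all ordered pairs (s,t) of the length of the shortest such path is at most 1.25m. -/
/-- Number of nodes of the Papillon network `B_absolute(k, m)`. -/
def absN (k m : ℕ) : ℕ := (2 * k + 1) ^ m * m

/-- The absolute distance `min((v - u) mod n, (u - v) mod n)` on a ring of `n` nodes. -/
def absDelta (n : ℕ) (u v : Fin n) : ℕ :=
  min (((v : ℕ) + n - (u : ℕ)) % n) (((u : ℕ) + n - (v : ℕ)) % n)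

/-- The level `ℓ(u) = (m-1) - (u mod m)` of a node. -/
def absLevel (m : ℕ) {n : ℕ} (u : Fin n) : ℕ := (m - 1) - ((u : ℕ) % m)

/-- The `2k+1` "forward" links of `B_absolute(k, m)`: `u` links to `(u + x) mod n` for
`x ∈ {1 + i·m·(2k+1)^{ℓ(u)} : -k ≤ i ≤ k}`. -/
def absForwardEdge (k m : ℕ) (u v : Fin (absN k m)) : Prop :=
  ∃ i : ℤ, -(k : ℤ) ≤ i ∧ i ≤ (k : ℤ) ∧
    ((v : ℕ) : ℤ) =
      (((u : ℕ) : ℤ) + (1 + i * (m : ℤ) * ((2 * (k : ℤ) + 1)) ^ absLevel m u)) %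
        ((absN k m : ℕ) : ℤ)

/-- The "back edge" of `B_absolute(k, m)`: `u` links to `(u + x) mod n` for `x = -m + 1`. -/
def absBackEdge (k m : ℕ) (u v : Fin (absN k m)) : Prop :=
  ((v : ℕ) : ℤ) = (((u : ℕ) : ℤ) + (1 - (m : ℤ))) % ((absN k m : ℕ) : ℤ)

/-- The directed edges of `B_absolute(k, m)`. -/
def absEdge (k m : ℕ) (u v : Fin (absN k m)) : Prop :=
  absForwardEdge k m u v ∨ absBackEdge k m u v

/-- `v` is a greedy next hop from `u` towards target `t` with respect to `δ_absolute`: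
`v` is a neighbor of `u` minimizing the absolute distance to `t` among `u`'s neighbors. -/
def absGreedyStep (k m : ℕ) (t u v : Fin (absN k m)) : Prop :=
  absEdge k m u v ∧ ∀ v', absEdge k m u v' →
    absDelta (absN k m) v t ≤ absDelta (absN k m) v' t

/-- The undirected graph underlying `B_absolute(k, m)`: `{u, v}` is an edge whenever `u`
has an out-going link to `v` or `v` has an out-going link to `u`. -/
def absUndirEdge (k m : ℕ) (u v : Fin (absN k m)) : Prop :=
  absEdge k m u v ∨ absEdge k m v u

lemma mod_shift_cancel (m x u v : ℕ) (hx : x < m) (huv : m ∣ u + v) :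
    ((x + u) % m + v) % m = x := by
  obtain ⟨e, he⟩ := huv
  rw [Nat.mod_add_mod]
  have h : x + u + v = x + m * e := by rw [Nat.add_assoc, he]
  rw [h, Nat.add_mul_mod_self_left, Nat.mod_eq_of_lt hx]

lemma dvd_add_mod_compl (m c : ℕ) (hm : 0 < m) : m ∣ c + (m - c % m) := by
  have h1 : c % m < m := Nat.mod_lt _ hm
  have h2 : m * (c / m) + c % m = c := Nat.div_add_mod c m
  refine ⟨c / m + 1, ?_⟩
  calc c + (m - c % m) = m * (c / m) + c % m + (m - c % m) := by rw [h2]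
    _ = m * (c / m) + m := by rw [Nat.add_assoc, Nat.add_sub_cancel' (le_of_lt h1)]
    _ = m * (c / m + 1) := by ring

lemma sum_shift {β : Type*} [AddCommMonoid β] (m c : ℕ) (hm : 0 < m) (f : ℕ → β) :
    ∑ x ∈ Finset.range m, f ((x + c) % m) = ∑ x ∈ Finset.range m, f x := by
  refine Finset.sum_nbij' (fun x => (x + c) % m) (fun y => (y + (m - c % m)) % m)
    ?_ ?_ ?_ ?_ ?_
  · intro a _; exact Finset.mem_range.2 (Nat.mod_lt _ hm)
  · intro a _; exact Finset.mem_range.2 (Nat.mod_lt _ hm)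
  · intro a ha
    exact mod_shift_cancel m a c (m - c % m) (Finset.mem_range.1 ha) (dvd_add_mod_compl m c hm)
  · intro a ha
    exact mod_shift_cancel m a (m - c % m) c (Finset.mem_range.1 ha)
      (by rw [Nat.add_comm]; exact dvd_add_mod_compl m c hm)
  · intro a _; rfl

lemma digit_sum (b c : ℕ) : ∀ m, ∑ ℓ ∈ Finset.range m, c / b ^ ℓ % b * b ^ ℓ = c % b ^ m := by
  intro m; induction m with
  | zero => simp [Nat.mod_one]
  | succ m ih =>
      rw [Finset.sum_range_succ, ih, pow_succ, Nat.mod_mul]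
      ring

lemma mod_compl_of_dvd (m A B : ℕ) (hm : 0 < m) (h : m ∣ A + B) : B % m = (m - A % m) % m := by
  have hA : A % m < m := Nat.mod_lt _ hm
  have hB : B % m < m := Nat.mod_lt _ hm
  have h0 : (A % m + B % m) % m = 0 := by
    rw [Nat.mod_add_mod, Nat.add_mod_mod]
    exact Nat.mod_eq_zero_of_dvd h
  obtain ⟨e, he⟩ := Nat.dvd_of_mod_eq_zero h0
  have he2 : e < 2 := by
    have h3 : m * e < m * 2 := by rw [← he]; omega
    exact Nat.lt_of_mul_lt_mul_left h3
  interval_cases e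
  · rw [Nat.mul_zero] at he
    have hA0 : A % m = 0 := by omega
    rw [hA0, Nat.sub_zero, Nat.mod_self]
    omega
  · rw [Nat.mul_one] at he
    rw [Nat.mod_eq_of_lt (show m - A % m < m by omega)]
    omega

lemma sum_period (m : ℕ) (g : ℕ → ℕ) (c : ℕ) :
    ∀ q, ∑ x ∈ Finset.range (m * q), g ((x + c) % m) = q * ∑ x ∈ Finset.range m, g x := by
  intro q; induction q with
  | zero => simp
  | succ q ih =>
      have h4 : ∑ x ∈ Finset.range m, g ((x + c) % m) = ∑ x ∈ Finset.range m, g x := by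
        rcases Nat.eq_zero_or_pos m with hm | hm
        · simp [hm]
        · exact sum_shift m c hm g
      have h1 : m * (q + 1) = m * q + m := by ring
      rw [h1, Finset.sum_range_add, ih]
      have h2 : ∑ x ∈ Finset.range m, g ((m * q + x + c) % m)
          = ∑ x ∈ Finset.range m, g ((x + c) % m) := by
        refine Finset.sum_congr rfl fun x _ => ?_
        rw [show m * q + x + c = x + c + m * q by ring, Nat.add_mul_mod_self_left]
      rw [h2, h4]; ring

lemma sum_min_bound (m : ℕ) (hm : 1 ≤ m) :
    4 * ∑ r ∈ Finset.range m, min r ((m - r) % m) ≤ m * m := by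
  have hsplit : ∑ r ∈ Finset.range (m/2+1), min r ((m - r) % m)
      + ∑ r ∈ Finset.Ico (m/2+1) m, min r ((m - r) % m)
      = ∑ r ∈ Finset.range m, min r ((m - r) % m) :=
    Finset.sum_range_add_sum_Ico _ (by omega)
  have h1 : ∑ r ∈ Finset.range (m/2+1), min r ((m - r) % m) = ∑ r ∈ Finset.range (m/2+1), r := by
    refine Finset.sum_congr rfl fun r hr => ?_
    have hr' : r ≤ m / 2 := by have := Finset.mem_range.1 hr; omega
    rcases Nat.eq_zero_or_pos r with h0 | h0
    · simp [h0]
    · rw [Nat.mod_eq_of_lt (by omega : m - r < m)]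
      exact min_eq_left (by omega)
  have h2 : ∑ r ∈ Finset.Ico (m/2+1) m, min r ((m - r) % m)
      = ∑ i ∈ Finset.range (m - (m/2+1)), (m - (m/2+1) - i) := by
    rw [Finset.sum_Ico_eq_sum_range]
    refine Finset.sum_congr rfl fun i hi => ?_
    have hi' : i < m - (m/2+1) := Finset.mem_range.1 hi
    rw [Nat.mod_eq_of_lt (by omega : m - (m/2+1+i) < m)]
    rw [min_eq_right (by omega)]
    omega
  set N := m - (m/2+1) with hN
  have h3 : ∑ i ∈ Finset.range N, (N - i) = (∑ i ∈ Finset.range N, i) + N := by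
    have := Finset.sum_range_reflect (fun j => j + 1) N
    have h4 : ∑ i ∈ Finset.range N, (N - i) = ∑ j ∈ Finset.range N, (N - 1 - j + 1) := by
      refine Finset.sum_congr rfl fun i hi => ?_
      have := Finset.mem_range.1 hi; omega
    rw [h4, this, Finset.sum_add_distrib, Finset.sum_const, Finset.card_range, smul_eq_mul, mul_one]
  have hG1 := Finset.sum_range_id_mul_two (m/2+1)
  have hG2 := Finset.sum_range_id_mul_two N
  have hm2 : m = 2 * (m/2) + m % 2 := by omega
  have hNval : N = m - (m/2) - 1 := by omega
  set a := m / 2 with ha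
  have haa : (a + 1) - 1 = a := by omega
  rw [haa] at hG1
  set G1 := ∑ i ∈ Finset.range (a + 1), i with hG1def
  set G2 := ∑ i ∈ Finset.range N, i with hG2def
  have hG1' : G1 * 2 = a * a + a := by rw [hG1]; ring
  have hG2' : G2 * 2 + N = N * N := by
    rcases Nat.eq_zero_or_pos N with h0 | h0
    · rw [hG2def, h0]; simp
    · obtain ⟨P, hP⟩ : ∃ P, N = P + 1 := ⟨N - 1, by omega⟩
      rw [hG2, hP, Nat.add_sub_cancel]; ring
  rw [← hsplit, h1, h2, h3]
  rcases (show m % 2 = 0 ∨ m % 2 = 1 by omega) with he | he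
  · have h5 : 1 ≤ a := by omega
    have h6 : N + 1 = a := by omega
    have hm4 : m * m = 4 * (a * a) := by rw [show m = 2 * a by omega]; ring
    have haN : a * a = N * N + 2 * N + 1 := by rw [← h6]; ring
    linarith [hG1', hG2', hm4, haN]
  · have h6 : N = a := by omega
    have hm4 : m * m = 4 * (a * a) + 4 * a + 1 := by rw [show m = 2 * a + 1 by omega]; ring
    have hNN : N * N = a * a := by rw [h6]
    linarith [hG1', hG2', hm4, hNN, h6]

lemma directed_path (k m : ℕ) (hk : 1 ≤ k) (hm : 1 ≤ m) (s t : Fin (absN k m)) (L : ℕ)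
    (hL : m ≤ L) (hdvd : (m : ℤ) ∣ (((t : ℕ) : ℤ) - ((s : ℕ) : ℤ) - (L : ℤ))) :
    ∃ w : ℕ → Fin (absN k m), w 0 = s ∧ w L = t ∧ ∀ j < L, absEdge k m (w j) (w (j + 1)) := by
  classical
  have hnpos : 0 < absN k m :=
    Nat.mul_pos (Nat.pow_pos (by omega)) (by omega)
  obtain ⟨E, hE⟩ := hdvd
  set b : ℕ := 2 * k + 1 with hb
  set M : ℕ := b ^ m with hM
  have hMpos : 0 < M := Nat.pow_pos (by omega)
  have hnM : absN k m = M * m := rfl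
  obtain ⟨H, hH⟩ : ∃ H : ℕ, M = 2 * H + 1 := by
    have hodd : Odd M := Odd.pow ⟨k, by omega⟩
    obtain ⟨H, hH⟩ := hodd; exact ⟨H, by omega⟩
  have hMz : (0 : ℤ) < (M : ℤ) := by exact_mod_cast hMpos
  set c : ℕ := ((E + (H : ℤ)) % (M : ℤ)).toNat with hc
  have hcz : (c : ℤ) = (E + (H : ℤ)) % (M : ℤ) :=
    Int.toNat_of_nonneg (Int.emod_nonneg _ (by exact_mod_cast hMpos.ne'))
  have hcM : c < M := by
    have h2 := Int.emod_lt_of_pos (E + (H : ℤ)) hMz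
    omega
  set a : ℕ → ℕ := fun ℓ => c / b ^ ℓ % b with ha
  have hab : ∀ ℓ, a ℓ < b := fun ℓ => Nat.mod_lt _ (by omega)
  have hdsum : ∑ ℓ ∈ Finset.range m, a ℓ * b ^ ℓ = c := by
    show ∑ ℓ ∈ Finset.range m, c / b ^ ℓ % b * b ^ ℓ = c
    rw [digit_sum b c m, ← hM, Nat.mod_eq_of_lt hcM]
  set d : ℕ → ℤ := fun ℓ => (a ℓ : ℤ) - (k : ℤ) with hd
  set lev : ℕ → ℕ := fun j => m - 1 - (((s : ℕ) + j) % m) with hlev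
  set D : ℕ → ℤ := fun j => if j < m then d (lev j) else 0 with hD
  set W : ℕ → ℤ :=
    fun j => ((s : ℕ) : ℤ) + (j : ℤ) + (m : ℤ) * ∑ j' ∈ Finset.range j, D j' * (b : ℤ) ^ lev j'
    with hWdef
  have hnz : ((absN k m : ℕ) : ℤ) ≠ 0 := by exact_mod_cast hnpos.ne'
  have hnzpos : (0 : ℤ) < ((absN k m : ℕ) : ℤ) := by exact_mod_cast hnpos
  have hVlt : ∀ j, (W j % ((absN k m : ℕ) : ℤ)).toNat < absN k m := by
    intro j
    have h1 := Int.emod_nonneg (W j) hnz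
    have h2 := Int.emod_lt_of_pos (W j) hnzpos
    omega
  have hVz : ∀ j, (((W j % ((absN k m : ℕ) : ℤ)).toNat : ℕ) : ℤ) = W j % ((absN k m : ℕ) : ℤ) :=
    fun j => Int.toNat_of_nonneg (Int.emod_nonneg _ hnz)
  have hmdvdn : ((m : ℕ) : ℤ) ∣ ((absN k m : ℕ) : ℤ) := by
    exact_mod_cast (⟨M, by rw [hnM]; ring⟩ : m ∣ absN k m)
  have hWm : ∀ j, W j % (m : ℤ) = (((s : ℕ) : ℤ) + (j : ℤ)) % (m : ℤ) := by
    intro j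
    show (((s : ℕ) : ℤ) + (j : ℤ) + (m : ℤ) * ∑ j' ∈ Finset.range j, D j' * (b : ℤ) ^ lev j')
        % (m : ℤ) = _
    exact Int.add_mul_emod_self_left _ _ _
  have hVm : ∀ j, ((W j % ((absN k m : ℕ) : ℤ)).toNat) % m = ((s : ℕ) + j) % m := by
    intro j
    have h1 : (W j % ((absN k m : ℕ) : ℤ)) % (m : ℤ) = (((s : ℕ) : ℤ) + (j : ℤ)) % (m : ℤ) := by
      rw [Int.emod_emod_of_dvd _ hmdvdn, hWm]
    rw [← hVz j] at h1
    have h3 : ((((W j % ((absN k m : ℕ) : ℤ)).toNat % m : ℕ)) : ℤ)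
        = (((((s : ℕ) + j) % m : ℕ)) : ℤ) := by push_cast; exact h1
    exact_mod_cast h3
  refine ⟨fun j => ⟨(W j % ((absN k m : ℕ) : ℤ)).toNat, hVlt j⟩, ?_, ?_, ?_⟩
  · apply Fin.ext
    show (W 0 % ((absN k m : ℕ) : ℤ)).toNat = (s : ℕ)
    have h0 : W 0 = ((s : ℕ) : ℤ) := by
      show ((s : ℕ) : ℤ) + ((0 : ℕ) : ℤ) + (m : ℤ) * ∑ j' ∈ Finset.range 0, D j' * (b : ℤ) ^ lev j'
          = ((s : ℕ) : ℤ)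
      simp
    have h1 : W 0 % ((absN k m : ℕ) : ℤ) = ((s : ℕ) : ℤ) := by
      rw [h0, Int.emod_eq_of_lt (by positivity) (by exact_mod_cast s.isLt)]
    omega
  · -- endpoint
    apply Fin.ext
    show (W L % ((absN k m : ℕ) : ℤ)).toNat = (t : ℕ)
    have hsub : ∑ j' ∈ Finset.range L, D j' * (b : ℤ) ^ lev j'
        = ∑ j' ∈ Finset.range m, d (lev j') * (b : ℤ) ^ lev j' := by
      rw [← Finset.sum_subset (Finset.range_subset_range.2 hL)
        (fun x _ hx => by
          have hxm : ¬ x < m := by simpa using hx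
          show (if x < m then d (lev x) else 0) * (b : ℤ) ^ lev x = 0
          rw [if_neg hxm, zero_mul])]
      refine Finset.sum_congr rfl fun j hj => ?_
      have hjm : j < m := Finset.mem_range.1 hj
      show (if j < m then d (lev j) else 0) * (b : ℤ) ^ lev j = d (lev j) * (b : ℤ) ^ lev j
      rw [if_pos hjm]
    have hlevx : ∀ j, lev j = m - 1 - ((j + (s : ℕ)) % m) := fun j => by
      show m - 1 - (((s : ℕ) + j) % m) = m - 1 - ((j + (s : ℕ)) % m)
      rw [Nat.add_comm]
    have h5 : ∑ x ∈ Finset.range m,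
          d (m - 1 - ((x + (s : ℕ)) % m)) * (b : ℤ) ^ (m - 1 - ((x + (s : ℕ)) % m))
        = ∑ x ∈ Finset.range m, d (m - 1 - x) * (b : ℤ) ^ (m - 1 - x) :=
      sum_shift m ((s : ℕ)) (by omega) (fun x => d (m - 1 - x) * (b : ℤ) ^ (m - 1 - x))
    have h6 : ∑ x ∈ Finset.range m, d (m - 1 - x) * (b : ℤ) ^ (m - 1 - x)
        = ∑ ℓ ∈ Finset.range m, d ℓ * (b : ℤ) ^ ℓ :=
      Finset.sum_range_reflect (fun ℓ => d ℓ * (b : ℤ) ^ ℓ) m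
    have hre : ∑ j' ∈ Finset.range m, d (lev j') * (b : ℤ) ^ lev j'
        = ∑ ℓ ∈ Finset.range m, d ℓ * (b : ℤ) ^ ℓ := by
      rw [← h6, ← h5]
      refine Finset.sum_congr rfl fun j _ => ?_
      rw [hlevx j]
    have hsum_d : ∑ ℓ ∈ Finset.range m, d ℓ * (b : ℤ) ^ ℓ = (c : ℤ) - (H : ℤ) := by
      have hgeom := geom_sum_mul ((b : ℕ) : ℤ) m
      have hb1 : ((b : ℕ) : ℤ) - 1 = 2 * (k : ℤ) := by rw [hb]; push_cast; ring
      have hbM : ((b : ℕ) : ℤ) ^ m = (M : ℤ) := by rw [hM]; push_cast; ring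
      rw [hb1, hbM] at hgeom
      have hMH : (M : ℤ) - 1 = 2 * (H : ℤ) := by
        have h7 : (M : ℤ) = 2 * (H : ℤ) + 1 := by exact_mod_cast hH
        omega
      rw [hMH] at hgeom
      have hkgeo : (k : ℤ) * ∑ ℓ ∈ Finset.range m, ((b : ℕ) : ℤ) ^ ℓ = (H : ℤ) := by linarith
      have hsa : ∑ ℓ ∈ Finset.range m, ((a ℓ : ℤ)) * (b : ℤ) ^ ℓ = (c : ℤ) := by
        exact_mod_cast congrArg (Nat.cast : ℕ → ℤ) hdsum
      calc ∑ ℓ ∈ Finset.range m, d ℓ * (b : ℤ) ^ ℓ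
          = ∑ ℓ ∈ Finset.range m, ((a ℓ : ℤ) * (b : ℤ) ^ ℓ - (k : ℤ) * (b : ℤ) ^ ℓ) := by
            refine Finset.sum_congr rfl fun ℓ _ => ?_
            show ((a ℓ : ℤ) - (k : ℤ)) * (b : ℤ) ^ ℓ = _
            ring
        _ = (∑ ℓ ∈ Finset.range m, (a ℓ : ℤ) * (b : ℤ) ^ ℓ)
            - (k : ℤ) * ∑ ℓ ∈ Finset.range m, (b : ℤ) ^ ℓ := by
            rw [Finset.sum_sub_distrib, Finset.mul_sum]
        _ = (c : ℤ) - (H : ℤ) := by rw [hsa, hkgeo]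
    have hQ : (c : ℤ) - (H : ℤ) = E - (M : ℤ) * ((E + (H : ℤ)) / (M : ℤ)) := by
      rw [hcz, Int.emod_def]; ring
    have hnMz : ((absN k m : ℕ) : ℤ) = (M : ℤ) * (m : ℤ) := by exact_mod_cast hnM
    have hWL : W L = ((t : ℕ) : ℤ) - ((absN k m : ℕ) : ℤ) * ((E + (H : ℤ)) / (M : ℤ)) := by
      show ((s : ℕ) : ℤ) + (L : ℤ) + (m : ℤ) * ∑ j' ∈ Finset.range L, D j' * (b : ℤ) ^ lev j' = _
      rw [hsub, hre, hsum_d, hQ]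
      linear_combination (-1 : ℤ) * hE + ((E + (H : ℤ)) / (M : ℤ)) * hnMz
    have hWLmod : W L % ((absN k m : ℕ) : ℤ) = ((t : ℕ) : ℤ) := by
      rw [hWL, sub_eq_add_neg, ← mul_neg, Int.add_mul_emod_self_left,
        Int.emod_eq_of_lt (by positivity) (by exact_mod_cast t.isLt)]
    omega
  · -- edges
    intro j hj
    left
    refine ⟨D j, ?_, ?_, ?_⟩
    · show -(k : ℤ) ≤ (if j < m then d (lev j) else 0)
      split
      · have h8 := hab (lev j)
        show -(k : ℤ) ≤ (a (lev j) : ℤ) - (k : ℤ)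
        omega
      · omega
    · show (if j < m then d (lev j) else 0) ≤ (k : ℤ)
      split
      · have h8 := hab (lev j)
        show (a (lev j) : ℤ) - (k : ℤ) ≤ (k : ℤ)
        omega
      · omega
    · have hlevw : absLevel m (⟨(W j % ((absN k m : ℕ) : ℤ)).toNat, hVlt j⟩ : Fin (absN k m))
          = lev j := by
        show m - 1 - ((W j % ((absN k m : ℕ) : ℤ)).toNat % m) = lev j
        rw [hVm j]
      have hstep : W (j + 1) = W j + (1 + D j * (m : ℤ) * (b : ℤ) ^ lev j) := by
        show ((s : ℕ) : ℤ) + ((j + 1 : ℕ) : ℤ)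
              + (m : ℤ) * ∑ j' ∈ Finset.range (j + 1), D j' * (b : ℤ) ^ lev j'
            = ((s : ℕ) : ℤ) + (j : ℤ) + (m : ℤ) * ∑ j' ∈ Finset.range j, D j' * (b : ℤ) ^ lev j'
              + (1 + D j * (m : ℤ) * (b : ℤ) ^ lev j)
        rw [Finset.sum_range_succ]
        push_cast
        ring
      have hbk : (2 * (k : ℤ) + 1) = ((b : ℕ) : ℤ) := by rw [hb]; push_cast; ring
      show (((W (j + 1) % ((absN k m : ℕ) : ℤ)).toNat : ℕ) : ℤ)
          = ((((W j % ((absN k m : ℕ) : ℤ)).toNat : ℕ) : ℤ)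
            + (1 + D j * (m : ℤ) * (2 * (k : ℤ) + 1)
                ^ absLevel m (⟨(W j % ((absN k m : ℕ) : ℤ)).toNat, hVlt j⟩ : Fin (absN k m))))
            % ((absN k m : ℕ) : ℤ)
      rw [hlevw, hVz (j + 1), hVz j, hbk, Int.emod_add_emod, hstep]

lemma dvd_helper (m nn : ℕ) (hm : 0 < m) (q : ℕ) (hq : nn = m * q) (sv tv : ℕ) (hs : sv < nn) :
    (m : ℤ) ∣ ((tv : ℤ) - (sv : ℤ) - ((m + (tv + nn - sv) % m : ℕ) : ℤ)) := by
  have hA : ((tv + nn - sv : ℕ) : ℤ) = (tv : ℤ) + (nn : ℤ) - (sv : ℤ) := by omega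
  refine ⟨((tv : ℤ) + (nn : ℤ) - (sv : ℤ)) / (m : ℤ) - (q : ℤ) - 1, ?_⟩
  have hqz : (nn : ℤ) = (m : ℤ) * (q : ℤ) := by exact_mod_cast hq
  push_cast
  rw [hA, Int.emod_def]
  linear_combination (-1 : ℤ) * hqz

lemma undir_walk_mem (k m : ℕ) (hk : 1 ≤ k) (hm : 1 ≤ m) (s t : Fin (absN k m)) :
    (m + ((t : ℕ) + absN k m - (s : ℕ)) % m) ∈
      {L : ℕ | ∃ w : ℕ → Fin (absN k m),
        w 0 = s ∧ w L = t ∧ ∀ j < L, absUndirEdge k m (w j) (w (j + 1))} ∧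
    (m + ((s : ℕ) + absN k m - (t : ℕ)) % m) ∈
      {L : ℕ | ∃ w : ℕ → Fin (absN k m),
        w 0 = s ∧ w L = t ∧ ∀ j < L, absUndirEdge k m (w j) (w (j + 1))} := by
  have hq : absN k m = m * (2 * k + 1) ^ m := by unfold absN; ring
  constructor
  · obtain ⟨w, hw0, hwL, hwe⟩ := directed_path k m hk hm s t
      (m + ((t : ℕ) + absN k m - (s : ℕ)) % m) (by omega)
      (dvd_helper m (absN k m) (by omega) _ hq (s : ℕ) (t : ℕ) s.isLt)
    exact ⟨w, hw0, hwL, fun j hj => Or.inl (hwe j hj)⟩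
  · set L := m + ((s : ℕ) + absN k m - (t : ℕ)) % m with hLdef
    obtain ⟨p, hp0, hpL, hpe⟩ := directed_path k m hk hm t s L (by omega)
      (dvd_helper m (absN k m) (by omega) _ hq (t : ℕ) (s : ℕ) t.isLt)
    refine ⟨fun j => p (L - j), by simpa using hpL, by simp [hp0], ?_⟩
    intro j hj
    have h2 : L - (j + 1) + 1 = L - j := by omega
    have h3 := hpe (L - (j + 1)) (by omega)
    rw [h2] at h3
    exact Or.inr h3


/-- In the undirected graph underlying `B_absolute(k, m)`: (1) every pair of nodes is
joined by a path of length at most `m + ⌊m/2⌋`; (2) the average over all ordered pairs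
`(s, t)` of the length of the shortest path from `s` to `t` is at most `1.25 m`. -/
theorem absolute_undirected_routing (k m : ℕ) (hk : 1 ≤ k) (hm : 1 ≤ m) :
    (∀ s t : Fin (absN k m), ∃ L ≤ m + m / 2, ∃ w : ℕ → Fin (absN k m),
      w 0 = s ∧ w L = t ∧ ∀ j < L, absUndirEdge k m (w j) (w (j + 1))) ∧
    (∑ s : Fin (absN k m), ∑ t : Fin (absN k m),
        ((sInf {L : ℕ | ∃ w : ℕ → Fin (absN k m),
          w 0 = s ∧ w L = t ∧ ∀ j < L, absUndirEdge k m (w j) (w (j + 1))} : ℕ) : ℝ)) /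
      ((absN k m : ℕ) : ℝ) ^ 2 ≤ (5 / 4 : ℝ) * m := by
  have hq : absN k m = m * (2 * k + 1) ^ m := by unfold absN; ring
  have hnpos : 0 < absN k m :=
    Nat.mul_pos (Nat.pow_pos (by omega)) (by omega)
  have hrr' : ∀ s t : Fin (absN k m),
      ((s : ℕ) + absN k m - (t : ℕ)) % m = (m - ((t : ℕ) + absN k m - (s : ℕ)) % m) % m := by
    intro s t
    have hs := s.isLt; have ht := t.isLt
    have hAB : ((t : ℕ) + absN k m - (s : ℕ)) + ((s : ℕ) + absN k m - (t : ℕ))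
        = 2 * absN k m := by omega
    exact mod_compl_of_dvd m _ _ (by omega)
      (by rw [hAB, hq]; exact ⟨2 * (2 * k + 1) ^ m, by ring⟩)
  have key : ∀ s t : Fin (absN k m),
      sInf {L : ℕ | ∃ w : ℕ → Fin (absN k m),
          w 0 = s ∧ w L = t ∧ ∀ j < L, absUndirEdge k m (w j) (w (j + 1))}
        ≤ m + min (((t : ℕ) + absN k m - (s : ℕ)) % m)
            ((m - ((t : ℕ) + absN k m - (s : ℕ)) % m) % m) := by
    intro s t
    have hmem := undir_walk_mem k m hk hm s t
    have h1 := Nat.sInf_le hmem.1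
    have h2 := Nat.sInf_le hmem.2
    have h3 := hrr' s t
    rcases le_total (((t : ℕ) + absN k m - (s : ℕ)) % m)
        ((m - ((t : ℕ) + absN k m - (s : ℕ)) % m) % m) with hab | hab
    · rwa [min_eq_left hab]
    · rw [min_eq_right hab, ← h3]
      exact h2
  constructor
  · intro s t
    have hmem := undir_walk_mem k m hk hm s t
    by_cases hcase : ((t : ℕ) + absN k m - (s : ℕ)) % m ≤ m / 2
    · exact ⟨_, by omega, hmem.1⟩
    · have hrm : ((t : ℕ) + absN k m - (s : ℕ)) % m < m := Nat.mod_lt _ (by omega)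
      have h3 := hrr' s t
      have h4 : (m - ((t : ℕ) + absN k m - (s : ℕ)) % m) % m
          = m - ((t : ℕ) + absN k m - (s : ℕ)) % m := Nat.mod_eq_of_lt (by omega)
      exact ⟨_, by omega, hmem.2⟩
  · -- average bound
    have key2 : ∀ s t : Fin (absN k m),
        sInf {L : ℕ | ∃ w : ℕ → Fin (absN k m),
            w 0 = s ∧ w L = t ∧ ∀ j < L, absUndirEdge k m (w j) (w (j + 1))}
          ≤ m + min (((t : ℕ) + (absN k m - (s : ℕ))) % m)
              ((m - ((t : ℕ) + (absN k m - (s : ℕ))) % m) % m) := by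
      intro s t
      have harg : (t : ℕ) + absN k m - (s : ℕ) = (t : ℕ) + (absN k m - (s : ℕ)) := by
        have hsl := s.isLt
        clear key hrr' hq
        omega
      have h0 := key s t
      rwa [harg] at h0
    have hsum_t : ∀ s : Fin (absN k m),
        4 * (∑ t : Fin (absN k m), sInf {L : ℕ | ∃ w : ℕ → Fin (absN k m),
            w 0 = s ∧ w L = t ∧ ∀ j < L, absUndirEdge k m (w j) (w (j + 1))})
          ≤ 5 * (absN k m * m) := by
      intro s
      have step1 := Finset.sum_le_sum (fun t (_ : t ∈ Finset.univ) => key2 s t)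
      have step2 : ∑ t : Fin (absN k m),
            (m + min (((t : ℕ) + (absN k m - (s : ℕ))) % m)
              ((m - ((t : ℕ) + (absN k m - (s : ℕ))) % m) % m))
          = absN k m * m
            + (2 * k + 1) ^ m * ∑ x ∈ Finset.range m, min x ((m - x) % m) := by
        rw [Fin.sum_univ_eq_sum_range
          (fun x => m + min ((x + (absN k m - (s : ℕ))) % m)
            ((m - (x + (absN k m - (s : ℕ))) % m) % m)) (absN k m)]
        rw [Finset.sum_add_distrib, Finset.sum_const, Finset.card_range, smul_eq_mul]
        have h9 : ∑ x ∈ Finset.range (absN k m),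
              min ((x + (absN k m - (s : ℕ))) % m) ((m - (x + (absN k m - (s : ℕ))) % m) % m)
            = (2 * k + 1) ^ m * ∑ x ∈ Finset.range m, min x ((m - x) % m) := by
          rw [show Finset.range (absN k m) = Finset.range (m * (2 * k + 1) ^ m) from by rw [hq]]
          exact sum_period m (fun x => min x ((m - x) % m)) (absN k m - (s : ℕ)) ((2 * k + 1) ^ m)
        rw [h9]
      refine le_trans (mul_le_mul_right (step1.trans_eq step2) 4) ?_
      calc 4 * (absN k m * m
              + (2 * k + 1) ^ m * ∑ x ∈ Finset.range m, min x ((m - x) % m))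
          = 4 * (absN k m * m)
            + (2 * k + 1) ^ m * (4 * ∑ x ∈ Finset.range m, min x ((m - x) % m)) := by ring
        _ ≤ 4 * (absN k m * m) + (2 * k + 1) ^ m * (m * m) :=
            Nat.add_le_add_left (mul_le_mul_right (sum_min_bound m hm) _) _
        _ = 5 * (absN k m * m) := by rw [hq]; ring
    have hSS : 4 * (∑ s : Fin (absN k m), ∑ t : Fin (absN k m),
          sInf {L : ℕ | ∃ w : ℕ → Fin (absN k m),
            w 0 = s ∧ w L = t ∧ ∀ j < L, absUndirEdge k m (w j) (w (j + 1))})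
        ≤ absN k m * (5 * (absN k m * m)) := by
      rw [Finset.mul_sum]
      refine le_trans (Finset.sum_le_sum (fun s (_ : s ∈ Finset.univ) => hsum_t s)) ?_
      rw [Finset.sum_const, Finset.card_univ, Fintype.card_fin, smul_eq_mul]
    have hpos : (0 : ℝ) < ((absN k m : ℕ) : ℝ) ^ 2 := by
      have : (0 : ℝ) < ((absN k m : ℕ) : ℝ) := by exact_mod_cast hnpos
      positivity
    rw [div_le_iff₀ hpos]
    have hR : 4 * (∑ s : Fin (absN k m), ∑ t : Fin (absN k m),
          ((sInf {L : ℕ | ∃ w : ℕ → Fin (absN k m),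
            w 0 = s ∧ w L = t ∧ ∀ j < L, absUndirEdge k m (w j) (w (j + 1))} : ℕ) : ℝ))
        ≤ ((absN k m : ℕ) : ℝ) * (5 * (((absN k m : ℕ) : ℝ) * (m : ℝ))) := by
      exact_mod_cast hSS
    have hsq : ((absN k m : ℕ) : ℝ) ^ 2 = ((absN k m : ℕ) : ℝ) * ((absN k m : ℕ) : ℝ) := sq _
    rw [hsq]
    linarith [hR]
end
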